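/- Let W ∈ ℝ^{K×d}, H ∈ ℝ^{d×N}, Y ∈ ℝ^{K×N}, and λ_W, λ_H, N' > 0. If W H Hᵀ + N' λ_W W = Y Hᵀ and Wᵀ W H + N' λ_H H = Wᵀ Y, then rank(W) = rank(H) and rank(W) ≤ rank(Y). -/

import Mathlib

open Matrix

lemma smul_one_posDef {n : ℕ} {c : ℝ} (hc : 0 < c) :
    (c • (1 : Matrix (Fin n) (Fin n) ℝ)).PosDef := by
  refine Matrix.posDef_iff_dotProduct_mulVec.mpr ⟨?_, fun x hx => ?_⟩
  · simp [Matrix.IsHermitian]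
  · rw [smul_mulVec, one_mulVec, dotProduct_smul]
    exact mul_pos hc (Matrix.dotProduct_star_self_pos_iff.mpr hx)

theorem stmt_8 (K N d : ℕ) (W : Matrix (Fin K) (Fin d) ℝ)
    (H : Matrix (Fin d) (Fin N) ℝ) (Y : Matrix (Fin K) (Fin N) ℝ)
    (lW lH N' : ℝ) (hlW : 0 < lW) (hlH : 0 < lH) (hN' : 0 < N')
    (h1 : W * (H * Hᵀ) + (N' * lW) • W = Y * Hᵀ)
    (h2 : Wᵀ * W * H + (N' * lH) • H = Wᵀ * Y) :
    W.rank = H.rank ∧ W.rank ≤ Y.rank := by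
  have hcW : 0 < N' * lW := mul_pos hN' hlW
  have hcH : 0 < N' * lH := mul_pos hN' hlH
  have hHT : Hᵀ = Hᴴ := rfl
  have hWT : Wᵀ = Wᴴ := rfl
  -- M1 = H Hᵀ + c I is pos def
  have hM1 : (H * Hᵀ + (N' * lW) • (1 : Matrix (Fin d) (Fin d) ℝ)).PosDef := by
    rw [hHT]
    exact Matrix.PosDef.posSemidef_add (Matrix.posSemidef_self_mul_conjTranspose H) (smul_one_posDef hcW)
  have hM2 : (Wᵀ * W + (N' * lH) • (1 : Matrix (Fin d) (Fin d) ℝ)).PosDef := by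
    rw [hWT]
    exact Matrix.PosDef.posSemidef_add (Matrix.posSemidef_conjTranspose_mul_self W) (smul_one_posDef hcH)
  have e1 : W * (H * Hᵀ + (N' * lW) • 1) = Y * Hᵀ := by
    rw [Matrix.mul_add, Matrix.mul_smul, Matrix.mul_one]
    exact h1
  have e2 : (Wᵀ * W + (N' * lH) • 1) * H = Wᵀ * Y := by
    rw [Matrix.add_mul, Matrix.smul_mul, Matrix.one_mul]
    exact h2
  have hdet1 : IsUnit (H * Hᵀ + (N' * lW) • (1 : Matrix (Fin d) (Fin d) ℝ)).det :=
    hM1.det_pos.ne'.isUnit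
  have hdet2 : IsUnit (Wᵀ * W + (N' * lH) • (1 : Matrix (Fin d) (Fin d) ℝ)).det :=
    hM2.det_pos.ne'.isUnit
  have rW : W.rank = (Y * Hᵀ).rank := by
    rw [← e1, Matrix.rank_mul_eq_left_of_isUnit_det _ _ hdet1]
  have rH : H.rank = (Wᵀ * Y).rank := by
    rw [← e2, Matrix.rank_mul_eq_right_of_isUnit_det _ _ hdet2]
  have h3 : W.rank ≤ H.rank := by
    rw [rW]
    calc (Y * Hᵀ).rank ≤ Hᵀ.rank := Matrix.rank_mul_le_right _ _
      _ = H.rank := Matrix.rank_transpose H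
  have h4 : H.rank ≤ W.rank := by
    rw [rH]
    calc (Wᵀ * Y).rank ≤ Wᵀ.rank := Matrix.rank_mul_le_left _ _
      _ = W.rank := Matrix.rank_transpose W
  refine ⟨le_antisymm h3 h4, ?_⟩
  rw [rW]
  exact Matrix.rank_mul_le_left _ _
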